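/- A nonzero multivector M ∈ ⋀X is a blade if and only if isp(M) = osp(M). -/

import Mathlib

/-!
Setup: `X` is a finite-dimensional real inner product space, `⋀X` its exterior
algebra.  We hypothesize a bilinear form `innE` on the exterior algebra which makes
the wedges of any orthonormal basis of `X` (over increasing index sets) orthonormal
— this characterizes the inner product of the paper — and a bilinear left
contraction `lcontr` adjoint to the wedge product: `⟨M⌟N, L⟩ = ⟨N, M∧L⟩`.
-/

noncomputable section

open ExteriorAlgebra

/-- The wedge product `v_{i₁} ∧ ⋯ ∧ v_{i_p}` of the vectors `v i`, `i ∈ s`,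
taken in increasing order of the indices. -/
def wedgeOf {X : Type*} [AddCommGroup X] [Module ℝ X] {n : ℕ}
    (v : Fin n → X) (s : Finset (Fin n)) : ExteriorAlgebra ℝ X :=
  ((s.sort (· ≤ ·)).map fun i => ι ℝ (v i)).prod

/-- The inner space `isp M = {v : v ∧ M = 0}`. -/
def isp {X : Type*} [AddCommGroup X] [Module ℝ X]
    (M : ExteriorAlgebra ℝ X) : Submodule ℝ X where
  carrier := {x | ι ℝ x * M = 0}
  add_mem' := by
    intro a b ha hb
    simp only [Set.mem_setOf_eq, map_add, add_mul] at *
    rw [ha, hb, add_zero]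
  zero_mem' := by simp
  smul_mem' := by
    intro c x hx
    simp only [Set.mem_setOf_eq, map_smul, smul_mul_assoc] at *
    rw [hx, smul_zero]

/-- The space `{v : v ⌟ M = 0}`, whose orthogonal complement is the outer space. -/
def ospKer {X : Type*} [NormedAddCommGroup X] [InnerProductSpace ℝ X]
    (lcontr : ExteriorAlgebra ℝ X →ₗ[ℝ] ExteriorAlgebra ℝ X →ₗ[ℝ] ExteriorAlgebra ℝ X)
    (M : ExteriorAlgebra ℝ X) : Submodule ℝ X where
  carrier := {x | lcontr (ι ℝ x) M = 0}
  add_mem' := by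
    intro a b ha hb
    simp only [Set.mem_setOf_eq, map_add, LinearMap.add_apply] at *
    rw [ha, hb, add_zero]
  zero_mem' := by simp
  smul_mem' := by
    intro c x hx
    simp only [Set.mem_setOf_eq, map_smul, LinearMap.smul_apply] at *
    rw [hx, smul_zero]

/-- The outer space `osp M = {v : v ⌟ M = 0}ᗮ`. -/
def osp {X : Type*} [NormedAddCommGroup X] [InnerProductSpace ℝ X]
    (lcontr : ExteriorAlgebra ℝ X →ₗ[ℝ] ExteriorAlgebra ℝ X →ₗ[ℝ] ExteriorAlgebra ℝ X)
    (M : ExteriorAlgebra ℝ X) : Submodule ℝ X :=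
  (ospKer lcontr M)ᗮ

/-- `innE` is the inner product of `⋀X`: for every orthonormal basis of `X`, the
wedges of basis vectors over increasing index sets form an orthonormal family. -/
def InnerOK {X : Type*} [NormedAddCommGroup X] [InnerProductSpace ℝ X]
    (innE : ExteriorAlgebra ℝ X →ₗ[ℝ] ExteriorAlgebra ℝ X →ₗ[ℝ] ℝ) : Prop :=
  ∀ (m : ℕ) (w : OrthonormalBasis (Fin m) ℝ X) (s t : Finset (Fin m)),
    innE (wedgeOf (⇑w) s) (wedgeOf (⇑w) t) = if s = t then 1 else 0

/-- `lcontr` is the left contraction: `⟨M ⌟ N, L⟩ = ⟨N, M ∧ L⟩`. -/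
def ContrOK {X : Type*} [NormedAddCommGroup X] [InnerProductSpace ℝ X]
    (innE : ExteriorAlgebra ℝ X →ₗ[ℝ] ExteriorAlgebra ℝ X →ₗ[ℝ] ℝ)
    (lcontr : ExteriorAlgebra ℝ X →ₗ[ℝ] ExteriorAlgebra ℝ X →ₗ[ℝ] ExteriorAlgebra ℝ X) :
    Prop :=
  ∀ M N L : ExteriorAlgebra ℝ X, innE (lcontr M N) L = innE N (M * L)


/-- A blade (simple multivector): a scalar multiple of an exterior product
`v₁ ∧ ⋯ ∧ v_p` of vectors of `X` (`p ≥ 0`; scalars and `0` are blades). -/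
def IsBlade {X : Type*} [AddCommGroup X] [Module ℝ X]
    (M : ExteriorAlgebra ℝ X) : Prop :=
  ∃ (c : ℝ) (p : ℕ) (f : Fin p → X), M = c • (List.ofFn fun i => ι ℝ (f i)).prod

open scoped InnerProductSpace

namespace BladeAux
variable {X : Type*} [AddCommGroup X] [Module ℝ X] {n : ℕ}

def P (e : Fin n → X) (l : List (Fin n)) : ExteriorAlgebra ℝ X :=
  (l.map fun i => ι ℝ (e i)).prod

/-- the sign -/
def sgn (i : Fin n) (l : List (Fin n)) : ℝ := (-1 : ℝ) ^ (l.countP fun j => decide (j < i))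

lemma sgn_ne_zero (i : Fin n) (l : List (Fin n)) : sgn i l ≠ 0 := by
  simp [sgn]

lemma ι_mul_P_sorted (e : Fin n → X) (i : Fin n) :
    ∀ l : List (Fin n), l.Pairwise (· ≤ ·) →
      ι ℝ (e i) * P e l = sgn i l • P e (l.orderedInsert (· ≤ ·) i)
  | [], _ => by simp [P, sgn]
  | j :: t, hs => by
    by_cases hij : i ≤ j
    · have h0 : ((j :: t).countP fun j => decide (j < i)) = 0 := by
        rw [List.countP_eq_zero]
        intro a ha
        simp only [decide_eq_true_eq]
        rcases List.mem_cons.mp ha with rfl | ha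
        · exact not_lt.mpr hij
        · exact not_lt.mpr (le_trans hij (List.rel_of_pairwise_cons hs ha))
      rw [List.orderedInsert, if_pos hij, sgn, h0, pow_zero, one_smul]
      rfl
    · have hlt : j < i := not_le.mp hij
      have ht : t.Pairwise (· ≤ ·) := List.Pairwise.of_cons hs
      have key := ι_mul_P_sorted e i t ht
      show ι ℝ (e i) * P e (j :: t) = _
      have hP : P e (j :: t) = ι ℝ (e j) * P e t := by simp [P]
      rw [List.orderedInsert, if_neg hij, hP, ← mul_assoc,
        (by
          have h := ExteriorAlgebra.ι_add_mul_swap (R := ℝ) (e i) (e j)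
          rw [eq_neg_iff_add_eq_zero]; exact h : ι ℝ (e i) * ι ℝ (e j) = -(ι ℝ (e j) * ι ℝ (e i))),
        neg_mul, mul_assoc, key]
      have hcnt : ((j :: t).countP fun j => decide (j < i))
          = (t.countP fun j => decide (j < i)) + 1 := by
        rw [List.countP_cons, if_pos (by simpa using hlt)]
      have hPc : P e (j :: t.orderedInsert (· ≤ ·) i) = ι ℝ (e j) * P e (t.orderedInsert (· ≤ ·) i) := by
        simp [P]
      rw [hPc, sgn, sgn, hcnt, pow_succ, mul_smul_comm, mul_comm _ (-1 : ℝ), ← smul_smul,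
        neg_one_smul]

lemma sort_insert_eq {i : Fin n} {s : Finset (Fin n)} (h : i ∉ s) :
    (insert i s).sort (· ≤ ·) = (s.sort (· ≤ ·)).orderedInsert (· ≤ ·) i := by
  apply List.Perm.eq_of_pairwise' (Finset.pairwise_sort _ _)
    (List.Pairwise.orderedInsert _ _ (Finset.pairwise_sort _ _))
  refine ((Finset.sort_perm_toList _ _).trans ?_).trans (List.perm_orderedInsert _ _ _).symm
  refine (Finset.toList_insert h).trans ?_
  exact List.Perm.cons i (Finset.sort_perm_toList _ _).symm

lemma wedgeOf_eq_P (e : Fin n → X) (s : Finset (Fin n)) :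
    wedgeOf e s = P e (s.sort (· ≤ ·)) := rfl

@[simp] lemma wedgeOf_empty (e : Fin n → X) : wedgeOf e ∅ = 1 := by
  simp [wedgeOf, Finset.sort_empty]

def eps (i : Fin n) (s : Finset (Fin n)) : ℝ := sgn i (s.sort (· ≤ ·))

lemma eps_ne_zero (i : Fin n) (s : Finset (Fin n)) : eps i s ≠ 0 := sgn_ne_zero _ _

lemma ι_mul_wedgeOf_of_not_mem (e : Fin n → X) {i : Fin n} {s : Finset (Fin n)} (h : i ∉ s) :
    ι ℝ (e i) * wedgeOf e s = eps i s • wedgeOf e (insert i s) := by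
  rw [wedgeOf_eq_P, wedgeOf_eq_P, sort_insert_eq h]
  exact ι_mul_P_sorted e i _ (Finset.pairwise_sort _ _)

lemma ι_mul_P_of_mem (e : Fin n → X) {i : Fin n} {l : List (Fin n)} (h : i ∈ l) :
    ι ℝ (e i) * P e l = 0 := by
  induction l with
  | nil => simp at h
  | cons j t ih =>
    have hP : P e (j :: t) = ι ℝ (e j) * P e t := by simp [P]
    rw [hP, ← mul_assoc]
    rcases List.mem_cons.mp h with h | h
    · subst h; rw [ι_sq_zero, zero_mul]
    · rw [(by
        have h := ExteriorAlgebra.ι_add_mul_swap (R := ℝ) (e i) (e j)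
        rw [eq_neg_iff_add_eq_zero]; exact h : ι ℝ (e i) * ι ℝ (e j) = -(ι ℝ (e j) * ι ℝ (e i))),
        neg_mul, mul_assoc, ih h, mul_zero, neg_zero]

lemma ι_mul_wedgeOf_of_mem (e : Fin n → X) {i : Fin n} {s : Finset (Fin n)} (h : i ∈ s) :
    ι ℝ (e i) * wedgeOf e s = 0 :=
  ι_mul_P_of_mem e ((Finset.mem_sort _).mpr h)

lemma ι_mul_wedgeOf_erase (e : Fin n → X) {i : Fin n} {s : Finset (Fin n)} (h : i ∈ s) :
    ι ℝ (e i) * wedgeOf e (s.erase i) = eps i (s.erase i) • wedgeOf e s := by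
  rw [ι_mul_wedgeOf_of_not_mem e (Finset.notMem_erase i s), Finset.insert_erase h]

section Inner
variable {X : Type*} [NormedAddCommGroup X] [InnerProductSpace ℝ X] {n : ℕ}

lemma ι_mul_mem_span (e : OrthonormalBasis (Fin n) ℝ X) (x : X)
    {z : ExteriorAlgebra ℝ X}
    (hz : z ∈ Submodule.span ℝ (Set.range (wedgeOf (⇑e)))) :
    ι ℝ x * z ∈ Submodule.span ℝ (Set.range (wedgeOf (⇑e))) := by
  set SP := Submodule.span ℝ (Set.range (wedgeOf (⇑e))) with hSP
  refine Submodule.span_induction ?_ ?_ ?_ ?_ hz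
  · rintro _ ⟨s, rfl⟩
    have hx : x = ∑ i, ⟪e i, x⟫_ℝ • e i := (e.sum_repr' x).symm
    rw [hx]
    rw [map_sum]
    rw [Finset.sum_mul]
    refine Submodule.sum_mem _ fun i _ => ?_
    rw [map_smul, smul_mul_assoc]
    refine Submodule.smul_mem _ _ ?_
    by_cases h : i ∈ s
    · rw [ι_mul_wedgeOf_of_mem (⇑e) h]; exact Submodule.zero_mem _
    · rw [ι_mul_wedgeOf_of_not_mem (⇑e) h]
      exact Submodule.smul_mem _ _ (Submodule.subset_span ⟨_, rfl⟩)
  · rw [mul_zero]; exact Submodule.zero_mem _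
  · intro a b _ _ ha hb
    rw [mul_add]; exact Submodule.add_mem _ ha hb
  · intro c a _ ha
    rw [mul_smul_comm]; exact Submodule.smul_mem _ _ ha

lemma span_wedgeOf_top (e : OrthonormalBasis (Fin n) ℝ X) :
    ⊤ ≤ Submodule.span ℝ (Set.range (wedgeOf (⇑e))) := by
  set SP := Submodule.span ℝ (Set.range (wedgeOf (⇑e))) with hSP
  have h1 : (1 : ExteriorAlgebra ℝ X) ∈ SP := by
    have := Submodule.subset_span (R := ℝ) (s := Set.range (wedgeOf (⇑e))) ⟨∅, rfl⟩
    rwa [wedgeOf_empty] at this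
  have hP : ∀ (l : List (Fin n)) (z : ExteriorAlgebra ℝ X), z ∈ SP → P (⇑e) l * z ∈ SP := by
    intro l
    induction l with
    | nil => intro z hz; simpa [P] using hz
    | cons j t ih =>
      intro z hz
      have : P (⇑e) (j :: t) * z = ι ℝ (e j) * (P (⇑e) t * z) := by
        simp [P, mul_assoc]
      rw [this]
      exact ι_mul_mem_span e _ (ih z hz)
  have hmul : ∀ a b : ExteriorAlgebra ℝ X, a ∈ SP → b ∈ SP → a * b ∈ SP := by
    intro a b ha hb
    refine Submodule.span_induction ?_ ?_ ?_ ?_ ha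
    · rintro _ ⟨s, rfl⟩
      exact hP _ _ hb
    · rw [zero_mul]; exact Submodule.zero_mem _
    · intro x y _ _ hx hy; rw [add_mul]; exact Submodule.add_mem _ hx hy
    · intro c x _ hx; rw [smul_mul_assoc]; exact Submodule.smul_mem _ _ hx
  intro z _
  refine ExteriorAlgebra.induction (fun r => ?_) (fun x => ?_) (fun a b ha hb => hmul a b ha hb)
    (fun a b ha hb => Submodule.add_mem _ ha hb) z
  · rw [Algebra.algebraMap_eq_smul_one]; exact Submodule.smul_mem _ _ h1
  · have := ι_mul_mem_span e x h1
    rwa [mul_one] at this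

end Inner

section InnerB
variable {X : Type*} [NormedAddCommGroup X] [InnerProductSpace ℝ X] {n : ℕ}
variable (innE : ExteriorAlgebra ℝ X →ₗ[ℝ] ExteriorAlgebra ℝ X →ₗ[ℝ] ℝ)

lemma lin_indep (e : OrthonormalBasis (Fin n) ℝ X) (hinn : InnerOK innE) :
    LinearIndependent ℝ (wedgeOf (⇑e)) := by
  rw [linearIndependent_iff']
  intro F g hsum t ht
  have h := congrArg (fun z => innE z (wedgeOf (⇑e) t)) hsum
  simp only [map_sum, map_smul, LinearMap.coe_sum, Finset.sum_apply, LinearMap.smul_apply,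
    LinearMap.zero_apply, map_zero, smul_eq_mul] at h
  rw [Finset.sum_congr rfl (fun s _ => by rw [hinn n e s t])] at h
  simp only [mul_ite, mul_one, mul_zero, Finset.sum_ite_eq' F t g] at h
  rwa [if_pos ht] at h

/-- The basis of the exterior algebra given by wedges of an orthonormal basis. -/
def wBasis (e : OrthonormalBasis (Fin n) ℝ X) (hinn : InnerOK innE)
    [FiniteDimensional ℝ X] : Module.Basis (Finset (Fin n)) ℝ (ExteriorAlgebra ℝ X) :=
  Module.Basis.mk (lin_indep innE e hinn) (span_wedgeOf_top e)

variable [FiniteDimensional ℝ X]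

@[simp] lemma wBasis_apply (e : OrthonormalBasis (Fin n) ℝ X) (hinn : InnerOK innE)
    (s : Finset (Fin n)) : wBasis innE e hinn s = wedgeOf (⇑e) s := by
  simp [wBasis]

lemma innE_wedge_repr (e : OrthonormalBasis (Fin n) ℝ X) (hinn : InnerOK innE)
    (z : ExteriorAlgebra ℝ X) (t : Finset (Fin n)) :
    innE z (wedgeOf (⇑e) t) = (wBasis innE e hinn).repr z t := by
  set b := wBasis innE e hinn
  have hmaps : innE.flip (wedgeOf (⇑e) t)
      = Finsupp.lapply t ∘ₗ (b.repr : ExteriorAlgebra ℝ X →ₗ[ℝ] _) := by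
    refine Module.Basis.ext b fun s => ?_
    simp only [LinearMap.flip_apply, LinearMap.coe_comp, Function.comp_apply,
      LinearEquiv.coe_coe, Module.Basis.repr_self, Finsupp.lapply_apply, Finsupp.single_apply]
    rw [wBasis_apply, hinn n e s t]
  have := congrArg (fun f : ExteriorAlgebra ℝ X →ₗ[ℝ] ℝ => f z) hmaps
  simpa using this

lemma innE_wedge_repr' (e : OrthonormalBasis (Fin n) ℝ X) (hinn : InnerOK innE)
    (z : ExteriorAlgebra ℝ X) (t : Finset (Fin n)) :
    innE (wedgeOf (⇑e) t) z = (wBasis innE e hinn).repr z t := by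
  set b := wBasis innE e hinn
  have hmaps : innE (wedgeOf (⇑e) t)
      = Finsupp.lapply t ∘ₗ (b.repr : ExteriorAlgebra ℝ X →ₗ[ℝ] _) := by
    refine Module.Basis.ext b fun s => ?_
    simp only [LinearMap.coe_comp, Function.comp_apply,
      LinearEquiv.coe_coe, Module.Basis.repr_self, Finsupp.lapply_apply, Finsupp.single_apply]
    rw [wBasis_apply, hinn n e t s]
    simp [eq_comm]
  have := congrArg (fun f : ExteriorAlgebra ℝ X →ₗ[ℝ] ℝ => f z) hmaps
  simpa using this

lemma eq_zero_of_innE (e : OrthonormalBasis (Fin n) ℝ X) (hinn : InnerOK innE)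
    (z : ExteriorAlgebra ℝ X) (h : ∀ t, innE z (wedgeOf (⇑e) t) = 0) : z = 0 := by
  have : (wBasis innE e hinn).repr z = 0 := by
    ext t
    rw [← innE_wedge_repr innE e hinn z t]
    exact h t
  simpa using congrArg (wBasis innE e hinn).repr.symm this

end InnerB

section KLemma
variable {X : Type*} [NormedAddCommGroup X] [InnerProductSpace ℝ X] {n : ℕ}
variable (innE : ExteriorAlgebra ℝ X →ₗ[ℝ] ExteriorAlgebra ℝ X →ₗ[ℝ] ℝ)
variable [FiniteDimensional ℝ X]

lemma innE_ι_mul_of_mem (e : OrthonormalBasis (Fin n) ℝ X) (hinn : InnerOK innE)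
    (i : Fin n) {t : Finset (Fin n)} (hit : i ∈ t) (M : ExteriorAlgebra ℝ X) :
    innE (ι ℝ (e i) * M) (wedgeOf (⇑e) t)
      = eps i (t.erase i) * (wBasis innE e hinn).repr M (t.erase i) := by
  set b := wBasis innE e hinn
  have hmaps : innE.flip (wedgeOf (⇑e) t) ∘ₗ LinearMap.mulLeft ℝ (ι ℝ (e i))
      = eps i (t.erase i) • (Finsupp.lapply (t.erase i) ∘ₗ
          (b.repr : ExteriorAlgebra ℝ X →ₗ[ℝ] _)) := by
    refine Module.Basis.ext b fun s => ?_
    simp only [LinearMap.coe_comp, Function.comp_apply, LinearMap.mulLeft_apply,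
      LinearMap.flip_apply, LinearMap.smul_apply, LinearEquiv.coe_coe, Module.Basis.repr_self,
      Finsupp.lapply_apply, Finsupp.single_apply, smul_eq_mul, wBasis_apply]
    rw [show b s = wedgeOf (⇑e) s from wBasis_apply innE e hinn s]
    by_cases his : i ∈ s
    · rw [ι_mul_wedgeOf_of_mem (⇑e) his, map_zero, LinearMap.zero_apply,
        if_neg (fun h : s = t.erase i => (Finset.notMem_erase i t) (h ▸ his)), mul_zero]
    · rw [ι_mul_wedgeOf_of_not_mem (⇑e) his, map_smul, LinearMap.smul_apply, smul_eq_mul,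
        hinn n e (insert i s) t]
      by_cases hst : s = t.erase i
      · rw [if_pos hst, if_pos (by rw [hst, Finset.insert_erase hit]), hst, mul_one]
      · rw [if_neg hst, if_neg (fun h : insert i s = t => hst (by
          rw [← h, Finset.erase_insert his])), mul_zero, mul_zero]
  have := congrArg (fun f : ExteriorAlgebra ℝ X →ₗ[ℝ] ℝ => f M) hmaps
  simpa using this

lemma innE_ι_mul_of_not_mem (e : OrthonormalBasis (Fin n) ℝ X) (hinn : InnerOK innE)
    (i : Fin n) {t : Finset (Fin n)} (hit : i ∉ t) (M : ExteriorAlgebra ℝ X) :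
    innE (ι ℝ (e i) * M) (wedgeOf (⇑e) t) = 0 := by
  set b := wBasis innE e hinn
  have hmaps : innE.flip (wedgeOf (⇑e) t) ∘ₗ LinearMap.mulLeft ℝ (ι ℝ (e i)) = 0 := by
    refine Module.Basis.ext b fun s => ?_
    simp only [LinearMap.coe_comp, Function.comp_apply, LinearMap.mulLeft_apply,
      LinearMap.flip_apply, LinearMap.zero_apply, wBasis_apply]
    rw [show b s = wedgeOf (⇑e) s from wBasis_apply innE e hinn s]
    by_cases his : i ∈ s
    · rw [ι_mul_wedgeOf_of_mem (⇑e) his, map_zero, LinearMap.zero_apply]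
    · rw [ι_mul_wedgeOf_of_not_mem (⇑e) his, map_smul, LinearMap.smul_apply, smul_eq_mul,
        hinn n e (insert i s) t,
        if_neg (fun h : insert i s = t => hit (h ▸ Finset.mem_insert_self i s)), mul_zero]
  have := congrArg (fun f : ExteriorAlgebra ℝ X →ₗ[ℝ] ℝ => f M) hmaps
  simpa using this

end KLemma

section SpanFacts
variable {X : Type*} [NormedAddCommGroup X] [InnerProductSpace ℝ X] {n : ℕ}

lemma mem_span_iff (e : OrthonormalBasis (Fin n) ℝ X) (S : Finset (Fin n)) (v : X) :
    v ∈ Submodule.span ℝ (⇑e '' ↑S) ↔ ∀ i ∉ S, ⟪e i, v⟫_ℝ = 0 := by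
  constructor
  · intro hv i hiS
    refine Submodule.span_induction ?_ ?_ ?_ ?_ hv
    · rintro _ ⟨j, hj, rfl⟩
      exact e.orthonormal.2 (fun h : i = j => hiS (h ▸ hj))
    · exact inner_zero_right _
    · intro x y _ _ hx hy; rw [inner_add_right, hx, hy, add_zero]
    · intro c x _ hx; rw [real_inner_smul_right, hx, mul_zero]
  · intro h
    have hv : v = ∑ i, ⟪e i, v⟫_ℝ • e i := (e.sum_repr' v).symm
    rw [hv]
    refine Submodule.sum_mem _ fun i _ => ?_
    by_cases hiS : i ∈ S
    · exact Submodule.smul_mem _ _ (Submodule.subset_span ⟨i, hiS, rfl⟩)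
    · rw [h i hiS, zero_smul]; exact Submodule.zero_mem _

lemma mem_span_orth_iff (e : OrthonormalBasis (Fin n) ℝ X) (S : Finset (Fin n)) (v : X) :
    v ∈ (Submodule.span ℝ (⇑e '' ↑S))ᗮ ↔ ∀ i ∈ S, ⟪e i, v⟫_ℝ = 0 := by
  rw [Submodule.mem_orthogonal]
  constructor
  · intro h i hiS
    exact h _ (Submodule.subset_span ⟨i, hiS, rfl⟩)
  · intro h u hu
    refine Submodule.span_induction ?_ ?_ ?_ ?_ hu
    · rintro _ ⟨j, hj, rfl⟩; exact h j hj
    · exact inner_zero_left _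
    · intro x y _ _ hx hy; rw [inner_add_left, hx, hy, add_zero]
    · intro c x _ hx; rw [real_inner_smul_left, hx, mul_zero]

end SpanFacts

section Core
variable {X : Type*} [NormedAddCommGroup X] [InnerProductSpace ℝ X] {n : ℕ}
variable (innE : ExteriorAlgebra ℝ X →ₗ[ℝ] ExteriorAlgebra ℝ X →ₗ[ℝ] ℝ)
variable (lcontr : ExteriorAlgebra ℝ X →ₗ[ℝ] ExteriorAlgebra ℝ X →ₗ[ℝ] ExteriorAlgebra ℝ X)
variable [FiniteDimensional ℝ X]

lemma lcontr_eq_zero_iff (e : OrthonormalBasis (Fin n) ℝ X) (hinn : InnerOK innE)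
    (hc : ContrOK innE lcontr) (z M : ExteriorAlgebra ℝ X) :
    lcontr z M = 0 ↔ ∀ t, innE M (z * wedgeOf (⇑e) t) = 0 := by
  constructor
  · intro h t
    rw [← hc z M (wedgeOf (⇑e) t), h, map_zero, LinearMap.zero_apply]
  · intro h
    refine eq_zero_of_innE innE e hinn _ fun t => ?_
    rw [hc z M (wedgeOf (⇑e) t)]
    exact h t

/-- isp of a nonzero multiple of a basis wedge. -/
lemma isp_smul_wedge (e : OrthonormalBasis (Fin n) ℝ X) (hinn : InnerOK innE)
    (S : Finset (Fin n)) {c : ℝ} (hcne : c ≠ 0) :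
    isp (c • wedgeOf (⇑e) S) = Submodule.span ℝ (⇑e '' ↑S) := by
  ext v
  have hmem : v ∈ isp (c • wedgeOf (⇑e) S) ↔ ι ℝ v * (c • wedgeOf (⇑e) S) = 0 := Iff.rfl
  rw [hmem, mul_smul_comm, smul_eq_zero_iff_right hcne, mem_span_iff e S v]
  have hv : ι ℝ v * wedgeOf (⇑e) S = ∑ i, ⟪e i, v⟫_ℝ • (ι ℝ (e i) * wedgeOf (⇑e) S) := by
    conv_lhs => rw [← e.sum_repr' v]
    rw [map_sum, Finset.sum_mul]
    exact Finset.sum_congr rfl fun i _ => by rw [map_smul, smul_mul_assoc]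
  constructor
  · intro h i hiS
    have h0 := congrArg (fun z => innE z (wedgeOf (⇑e) (insert i S))) h
    simp only [map_zero, LinearMap.zero_apply] at h0
    rw [hv, map_sum] at h0
    simp only [map_smul, LinearMap.coe_sum, Finset.sum_apply, LinearMap.smul_apply,
      smul_eq_mul] at h0
    rw [Finset.sum_eq_single_of_mem i (Finset.mem_univ i) ?_] at h0
    · rw [innE_ι_mul_of_mem innE e hinn i (Finset.mem_insert_self i S),
        Finset.erase_insert hiS] at h0
      have hrepr : (wBasis innE e hinn).repr (wedgeOf (⇑e) S) S = 1 := by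
        rw [← wBasis_apply innE e hinn S, Module.Basis.repr_self, Finsupp.single_apply, if_pos rfl]
      rw [hrepr, mul_one] at h0
      rcases mul_eq_zero.mp h0 with h' | h'
      · exact h'
      · exact absurd h' (eps_ne_zero i S)
    · intro j _ hji
      by_cases hjt : j ∈ insert i S
      · rw [innE_ι_mul_of_mem innE e hinn j hjt]
        have hrepr : (wBasis innE e hinn).repr (wedgeOf (⇑e) S) ((insert i S).erase j) = 0 := by
          rw [← wBasis_apply innE e hinn S, Module.Basis.repr_self, Finsupp.single_apply, if_neg]
          intro hEq
          rcases Finset.mem_insert.mp hjt with rfl | hjS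
          · exact hji rfl
          · exact (Finset.notMem_erase j (insert i S)) (hEq ▸ hjS)
        rw [hrepr, mul_zero, mul_zero]
      · rw [innE_ι_mul_of_not_mem innE e hinn j hjt, mul_zero]
  · intro h
    refine eq_zero_of_innE innE e hinn _ fun t => ?_
    rw [hv, map_sum]
    simp only [map_smul, LinearMap.coe_sum, Finset.sum_apply, LinearMap.smul_apply,
      smul_eq_mul]
    refine Finset.sum_eq_zero fun i _ => ?_
    by_cases hit : i ∈ t
    · rw [innE_ι_mul_of_mem innE e hinn i hit]
      by_cases hS : t.erase i = S
      · have hiS : i ∉ S := hS ▸ Finset.notMem_erase i t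
        rw [h i hiS, zero_mul]
      · have hrepr : (wBasis innE e hinn).repr (wedgeOf (⇑e) S) (t.erase i) = 0 := by
          rw [← wBasis_apply innE e hinn S, Module.Basis.repr_self, Finsupp.single_apply,
            if_neg (fun hEq => hS hEq.symm)]
        rw [hrepr, mul_zero, mul_zero]
    · rw [innE_ι_mul_of_not_mem innE e hinn i hit, mul_zero]

end Core

section Core2
variable {X : Type*} [NormedAddCommGroup X] [InnerProductSpace ℝ X] {n : ℕ}
variable (innE : ExteriorAlgebra ℝ X →ₗ[ℝ] ExteriorAlgebra ℝ X →ₗ[ℝ] ℝ)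
variable (lcontr : ExteriorAlgebra ℝ X →ₗ[ℝ] ExteriorAlgebra ℝ X →ₗ[ℝ] ExteriorAlgebra ℝ X)
variable [FiniteDimensional ℝ X]

lemma innE_wedge_smul_wedge (e : OrthonormalBasis (Fin n) ℝ X) (hinn : InnerOK innE)
    (S t : Finset (Fin n)) (v : X) :
    innE (wedgeOf (⇑e) S) (ι ℝ v * wedgeOf (⇑e) t)
      = ∑ i, ⟪e i, v⟫_ℝ * (if i ∉ t ∧ S = insert i t then eps i t else 0) := by
  have hv : ι ℝ v * wedgeOf (⇑e) t = ∑ i, ⟪e i, v⟫_ℝ • (ι ℝ (e i) * wedgeOf (⇑e) t) := by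
    conv_lhs => rw [← e.sum_repr' v]
    rw [map_sum, Finset.sum_mul]
    exact Finset.sum_congr rfl fun i _ => by rw [map_smul, smul_mul_assoc]
  rw [hv, map_sum]
  refine Finset.sum_congr rfl fun i _ => ?_
  rw [map_smul, smul_eq_mul]
  congr 1
  by_cases hit : i ∈ t
  · rw [ι_mul_wedgeOf_of_mem (⇑e) hit, map_zero, if_neg (fun h => h.1 hit)]
  · rw [ι_mul_wedgeOf_of_not_mem (⇑e) hit, map_smul, smul_eq_mul, hinn n e S (insert i t)]
    by_cases hS : S = insert i t
    · rw [if_pos hS, if_pos ⟨hit, hS⟩, mul_one]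
    · rw [if_neg hS, if_neg (fun h => hS h.2), mul_zero]

lemma ospKer_smul_wedge (e : OrthonormalBasis (Fin n) ℝ X) (hinn : InnerOK innE)
    (hc : ContrOK innE lcontr) (S : Finset (Fin n)) {c : ℝ} (hcne : c ≠ 0) :
    ospKer lcontr (c • wedgeOf (⇑e) S) = (Submodule.span ℝ (⇑e '' ↑S))ᗮ := by
  ext v
  have hmem : v ∈ ospKer lcontr (c • wedgeOf (⇑e) S)
      ↔ lcontr (ι ℝ v) (c • wedgeOf (⇑e) S) = 0 := Iff.rfl
  rw [hmem, map_smul, smul_eq_zero_iff_right hcne, mem_span_orth_iff e S v,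
    lcontr_eq_zero_iff innE lcontr e hinn hc]
  constructor
  · intro h i hiS
    have h0 := h (S.erase i)
    rw [innE_wedge_smul_wedge innE e hinn S (S.erase i) v] at h0
    rw [Finset.sum_eq_single_of_mem i (Finset.mem_univ i) ?_] at h0
    · rw [if_pos ⟨Finset.notMem_erase i S, (Finset.insert_erase hiS).symm⟩] at h0
      rcases mul_eq_zero.mp h0 with h' | h'
      · exact h'
      · exact absurd h' (eps_ne_zero i (S.erase i))
    · intro j _ hji
      rw [if_neg, mul_zero]
      rintro ⟨hj1, hj2⟩
      have hjS : j ∈ S := hj2 ▸ Finset.mem_insert_self j (S.erase i)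
      exact hj1 (Finset.mem_erase.mpr ⟨hji, hjS⟩)
  · intro h t
    rw [innE_wedge_smul_wedge innE e hinn S t v]
    refine Finset.sum_eq_zero fun i _ => ?_
    by_cases hcond : i ∉ t ∧ S = insert i t
    · have hiS : i ∈ S := hcond.2 ▸ Finset.mem_insert_self i t
      rw [h i hiS, zero_mul]
    · rw [if_neg hcond, mul_zero]

lemma osp_smul_wedge (e : OrthonormalBasis (Fin n) ℝ X) (hinn : InnerOK innE)
    (hc : ContrOK innE lcontr) (S : Finset (Fin n)) {c : ℝ} (hcne : c ≠ 0) :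
    osp lcontr (c • wedgeOf (⇑e) S) = Submodule.span ℝ (⇑e '' ↑S) := by
  rw [osp, ospKer_smul_wedge innE lcontr e hinn hc S hcne,
    Submodule.orthogonal_orthogonal]

end Core2

section Adapt
variable {X : Type*} [NormedAddCommGroup X] [InnerProductSpace ℝ X] [FiniteDimensional ℝ X]

open Module

lemma adapt (V : Submodule ℝ X) :
    ∃ (q : ℕ) (e : OrthonormalBasis (Fin (finrank ℝ V + q)) ℝ X),
      (∀ k : Fin (finrank ℝ V),
        e (Fin.castAdd q k) = ((stdOrthonormalBasis ℝ V) k : X)) ∧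
      (∀ k : Fin q, e (Fin.natAdd (finrank ℝ V) k) ∈ Vᗮ) := by
  set p := finrank ℝ V
  set q := finrank ℝ Vᗮ
  refine ⟨q, ?_⟩
  set bV := stdOrthonormalBasis ℝ V
  set bW := stdOrthonormalBasis ℝ Vᗮ
  set g : Fin p ⊕ Fin q → X := Sum.elim (fun k => (bV k : X)) (fun k => (bW k : X)) with hg
  have horth : Orthonormal ℝ g := by
    constructor
    · rintro (k | k)
      · exact bV.orthonormal.1 k
      · exact bW.orthonormal.1 k
    · rintro (k | k) (k' | k') hne
      · have : k ≠ k' := fun h => hne (h ▸ rfl)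
        simpa [g, Submodule.coe_inner] using bV.orthonormal.2 this
      · exact (bW k').2 _ (bV k).2
      · have := (bW k).2 _ (bV k').2
        simpa [g, real_inner_comm] using this
      · have : k ≠ k' := fun h => hne (h ▸ rfl)
        simpa [g, Submodule.coe_inner] using bW.orthonormal.2 this
  rcases isEmpty_or_nonempty (Fin p ⊕ Fin q) with hemp | hne
  · have hp0 : p = 0 := by
      by_contra h
      exact (hemp.false (Sum.inl ⟨0, Nat.pos_of_ne_zero h⟩)).elim
    have hq0 : q = 0 := by
      by_contra h
      exact (hemp.false (Sum.inr ⟨0, Nat.pos_of_ne_zero h⟩)).elim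
    have hX : finrank ℝ X = p + q := by
      rw [hp0, hq0]
      have := Submodule.finrank_add_finrank_orthogonal (K := V)
      omega
    refine ⟨(stdOrthonormalBasis ℝ X).reindex (finCongr hX), ?_, ?_⟩
    · intro k; exact (hemp.false (Sum.inl k)).elim
    · intro k; exact (hemp.false (Sum.inr k)).elim
  · have hcard : Fintype.card (Fin p ⊕ Fin q) = finrank ℝ X := by
      simp only [Fintype.card_sum, Fintype.card_fin]
      exact Submodule.finrank_add_finrank_orthogonal (K := V)
    have hli : LinearIndependent ℝ g := horth.linearIndependent
    set b0 := basisOfLinearIndependentOfCardEqFinrank hli hcard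
    have hb0 : ⇑b0 = g := coe_basisOfLinearIndependentOfCardEqFinrank hli hcard
    set ob := b0.toOrthonormalBasis (by rwa [hb0])
    have hob : ⇑ob = g := by
      rw [Basis.coe_toOrthonormalBasis, hb0]
    refine ⟨ob.reindex finSumFinEquiv, ?_, ?_⟩
    · intro k
      rw [OrthonormalBasis.coe_reindex]
      simp only [Function.comp_apply, finSumFinEquiv_symm_apply_castAdd, hob]
      rfl
    · intro k
      rw [OrthonormalBasis.coe_reindex]
      simp only [Function.comp_apply, finSumFinEquiv_symm_apply_natAdd, hob]
      rw [finSumFinEquiv_symm_apply_natAdd]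
      exact (bW k).2

end Adapt

section Main
variable {X : Type*} [NormedAddCommGroup X] [InnerProductSpace ℝ X] [FiniteDimensional ℝ X]
variable (innE : ExteriorAlgebra ℝ X →ₗ[ℝ] ExteriorAlgebra ℝ X →ₗ[ℝ] ℝ)
variable (lcontr : ExteriorAlgebra ℝ X →ₗ[ℝ] ExteriorAlgebra ℝ X →ₗ[ℝ] ExteriorAlgebra ℝ X)

open Module

lemma backward (hinn : InnerOK innE) (hc : ContrOK innE lcontr)
    (M : ExteriorAlgebra ℝ X) (h : isp M = osp lcontr M) : IsBlade M := by
  classical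
  set V : Submodule ℝ X := isp M with hV
  set p := finrank ℝ V
  obtain ⟨q, e, he1, he2⟩ := adapt V
  set S₀ : Finset (Fin (p + q)) := Finset.univ.filter (fun i => (i : ℕ) < p) with hS₀
  have hiV : ∀ i ∈ S₀, e i ∈ V := by
    intro i hi
    have hlt : (i : ℕ) < p := (Finset.mem_filter.mp hi).2
    have : i = Fin.castAdd q ⟨(i : ℕ), hlt⟩ := by
      apply Fin.ext; rfl
    rw [this, he1 ⟨(i : ℕ), hlt⟩]
    exact Submodule.coe_mem _
  have hiW : ∀ i ∉ S₀, e i ∈ Vᗮ := by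
    intro i hi
    have hge : p ≤ (i : ℕ) :=
      not_lt.mp (fun hlt => hi (Finset.mem_filter.mpr ⟨Finset.mem_univ i, hlt⟩))
    have hsub : (i : ℕ) - p < q := by
      have := i.isLt; omega
    have : i = Fin.natAdd p ⟨(i : ℕ) - p, hsub⟩ := by
      apply Fin.ext; simp [Fin.natAdd]; omega
    rw [this]
    exact he2 _
  have hmul0 : ∀ i ∈ S₀, ι ℝ (e i) * M = 0 := fun i hi => hiV i hi
  have hker : ∀ i ∉ S₀, lcontr (ι ℝ (e i)) M = 0 := by
    intro i hi
    have h1 : e i ∈ (osp lcontr M)ᗮ := h ▸ hiW i hi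
    rw [osp, Submodule.orthogonal_orthogonal] at h1
    exact h1
  set b := wBasis innE e hinn with hb
  have hc1 : ∀ s : Finset (Fin (p + q)), s ≠ S₀ → b.repr M s = 0 := by
    intro s hs
    by_cases hsub : S₀ ⊆ s
    · have hsub2 : ¬ (s ⊆ S₀) := fun h2 => hs (Finset.Subset.antisymm h2 hsub)
      obtain ⟨i, his, hiS₀⟩ := Finset.not_subset.mp hsub2
      have h0 := (lcontr_eq_zero_iff innE lcontr e hinn hc _ M).mp (hker i hiS₀) (s.erase i)
      rw [ι_mul_wedgeOf_erase (⇑e) his, map_smul, smul_eq_mul,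
        innE_wedge_repr innE e hinn M s] at h0
      rcases mul_eq_zero.mp h0 with h' | h'
      · exact absurd h' (eps_ne_zero _ _)
      · exact h'
    · obtain ⟨i, hiS₀, his⟩ := Finset.not_subset.mp hsub
      have h0 := congrArg (fun z => innE z (wedgeOf (⇑e) (insert i s))) (hmul0 i hiS₀)
      simp only [map_zero, LinearMap.zero_apply] at h0
      rw [innE_ι_mul_of_mem innE e hinn i (Finset.mem_insert_self i s) M,
        Finset.erase_insert his] at h0
      rcases mul_eq_zero.mp h0 with h' | h'
      · exact absurd h' (eps_ne_zero _ _)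
      · exact h'.symm ▸ h'
  set cS := b.repr M S₀ with hcS
  have hM : M = cS • wedgeOf (⇑e) S₀ := by
    have hsum := b.sum_repr M
    rw [Finset.sum_eq_single_of_mem S₀ (Finset.mem_univ S₀)
      (fun s _ hss => by rw [hc1 s hss, zero_smul])] at hsum
    conv_lhs => rw [← hsum]
    rw [hb, wBasis_apply]
  have hofn : (List.ofFn fun k : Fin (S₀.sort (· ≤ ·)).length =>
        ι ℝ (e ((S₀.sort (· ≤ ·))[(k : ℕ)])))
      = (S₀.sort (· ≤ ·)).map (fun j => ι ℝ (e j)) :=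
    List.ofFn_getElem_eq_map (S₀.sort (· ≤ ·)) (fun j => ι ℝ (e j))
  exact ⟨cS, (S₀.sort (· ≤ ·)).length, fun k => e ((S₀.sort (· ≤ ·))[(k : ℕ)]),
    hM.trans (by rw [wedgeOf, ← hofn])⟩

lemma forward (hinn : InnerOK innE) (hc : ContrOK innE lcontr)
    (M : ExteriorAlgebra ℝ X) (hM0 : M ≠ 0) (hbl : IsBlade M) :
    isp M = osp lcontr M := by
  classical
  obtain ⟨c, p, f, rfl⟩ := hbl
  have hprod : (List.ofFn fun i => ι ℝ (f i)).prod = ιMulti ℝ p f :=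
    (ExteriorAlgebra.ιMulti_apply f).symm
  rw [hprod] at hM0 ⊢
  have hNne : ιMulti ℝ p f ≠ 0 := by
    intro h0; exact hM0 (by rw [h0, smul_zero])
  have hf : LinearIndependent ℝ f := by
    by_contra hdep
    exact hNne (AlternatingMap.map_linearDependent _ f hdep)
  set V : Submodule ℝ X := Submodule.span ℝ (Set.range f) with hVdef
  have hp : finrank ℝ V = p := by
    rw [hVdef, finrank_span_eq_card hf, Fintype.card_fin]
  obtain ⟨q, e, he1, he2⟩ := adapt V
  set jmap : Fin p → Fin (finrank ℝ V + q) :=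
    fun k => Fin.castAdd q ((finCongr hp.symm) k) with hjmap
  have hval : ∀ k : Fin p, (jmap k : ℕ) = (k : ℕ) := fun k => rfl
  have hjmono : ∀ k k' : Fin p, k < k' → jmap k < jmap k' := by
    intro k k' hkk'
    rw [Fin.lt_def, hval, hval]
    exact hkk'
  have hjinj : Function.Injective jmap := by
    intro k k' hkk'
    have h2 : (jmap k : ℕ) = (jmap k' : ℕ) := congrArg Fin.val hkk'
    rw [hval, hval] at h2
    exact Fin.ext h2
  set S₀ : Finset (Fin (finrank ℝ V + q)) := (List.ofFn jmap).toFinset with hS₀def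
  have hsort : S₀.sort (· ≤ ·) = List.ofFn jmap := by
    refine List.Perm.eq_of_pairwise' (Finset.pairwise_sort _ _) ?_
      (List.perm_of_nodup_nodup_toFinset_eq (Finset.sort_nodup _ _)
        (List.nodup_ofFn.mpr hjinj) (by rw [Finset.sort_toFinset]))
    rw [List.pairwise_ofFn]
    intro k k' hkk'
    exact le_of_lt (hjmono k k' hkk')
  have hw : wedgeOf (⇑e) S₀ = ιMulti ℝ p (fun k => e (jmap k)) := by
    rw [wedgeOf, hsort, List.map_ofFn, ExteriorAlgebra.ιMulti_apply]
    rfl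
  -- bases of V
  set bU : Basis (Fin p) ℝ V := (stdOrthonormalBasis ℝ V).toBasis.reindex (finCongr hp)
    with hbU
  have hbUc : ∀ k, (bU k : X) = e (jmap k) := by
    intro k
    rw [hbU, Basis.reindex_apply, OrthonormalBasis.coe_toBasis, he1]
    rfl
  set A : AlternatingMap ℝ V (ExteriorAlgebra ℝ X) (Fin p) :=
    (ιMulti ℝ p).compLinearMap V.subtype with hA
  have hAbU : A ⇑bU = wedgeOf (⇑e) S₀ := by
    rw [hA, AlternatingMap.compLinearMap_apply, hw]
    congr 1
    funext k
    rw [← hbUc k]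
    rfl
  have hkey : A = (LinearMap.toSpanSingleton ℝ _ (A ⇑bU)).compAlternatingMap bU.det := by
    refine Basis.ext_alternating bU fun v hv => ?_
    set σ : Equiv.Perm (Fin p) :=
      Equiv.ofBijective v ((Finite.injective_iff_bijective).mp hv) with hσ
    have hvσ : ∀ i, bU (v i) = (⇑bU ∘ ⇑σ) i := fun i => rfl
    calc (A fun i => bU (v i)) = A (⇑bU ∘ ⇑σ) := by rw [funext hvσ]
      _ = Equiv.Perm.sign σ • A ⇑bU := A.map_perm ⇑bU σ
      _ = ((Equiv.Perm.sign σ : ℤ) : ℝ) • A ⇑bU := by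
          rw [Int.cast_smul_eq_zsmul]; rfl
      _ = (bU.det fun i => bU (v i)) • A ⇑bU := by
          congr 1
          rw [funext hvσ, show bU.det (⇑bU ∘ ⇑σ) = _ from bU.det.map_perm ⇑bU σ,
            Basis.det_self]
          rw [Units.smul_def, zsmul_eq_mul, mul_one]
      _ = _ := rfl
  set fV : Fin p → V := fun k => ⟨f k, Submodule.subset_span (Set.mem_range_self k)⟩ with hfV
  have hAfV : A fV = ιMulti ℝ p f := by
    rw [hA, AlternatingMap.compLinearMap_apply]
    congr 1
  have hMform : c • ιMulti ℝ p f = (c * bU.det fV) • wedgeOf (⇑e) S₀ := by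
    rw [← hAfV, hkey]
    simp only [LinearMap.compAlternatingMap_apply, LinearMap.toSpanSingleton_apply]
    rw [hAbU, smul_smul]
  have hcd : c * bU.det fV ≠ 0 := by
    intro h0
    rw [hMform, h0, zero_smul] at hM0
    exact hM0 rfl
  rw [hMform, isp_smul_wedge innE e hinn S₀ hcd, osp_smul_wedge innE lcontr e hinn hc S₀ hcd]

end Main


end BladeAux

/-- A nonzero multivector is a blade iff `isp M = osp M`. -/
theorem blade_iff_isp_eq_osp {X : Type*} [NormedAddCommGroup X]
    [InnerProductSpace ℝ X] [FiniteDimensional ℝ X]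
    (innE : ExteriorAlgebra ℝ X →ₗ[ℝ] ExteriorAlgebra ℝ X →ₗ[ℝ] ℝ)
    (lcontr : ExteriorAlgebra ℝ X →ₗ[ℝ] ExteriorAlgebra ℝ X →ₗ[ℝ] ExteriorAlgebra ℝ X)
    (hinn : InnerOK innE) (hc : ContrOK innE lcontr)
    (M : ExteriorAlgebra ℝ X) (hM0 : M ≠ 0) :
    IsBlade M ↔ isp M = osp lcontr M :=
  ⟨BladeAux.forward innE lcontr hinn hc M hM0,
   BladeAux.backward innE lcontr hinn hc M⟩

end
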